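/- If, for a permutation π of [n] with Hamming distance d from the identity, exactly x exchange mutations decrease the Hamming distance by 2, then exactly d − 2x exchange mutations decrease the Hamming distance by exactly 1, and x equals the number of 2-cycles (transpositions) in the cycle decomposition of π. -/

import Mathlib

set_option linter.unnecessarySeqFocus false

/-- Hamming distance of a permutation of `Fin n` to the identity. -/
def hamDist {n : ℕ} (π : Equiv.Perm (Fin n)) : ℕ :=
  (Finset.univ.filter fun i => π i ≠ i).card

open Finset in
lemma ham_split {n : ℕ} (π : Equiv.Perm (Fin n)) (i j : Fin n) (hij : i ≠ j) :
    ∃ C, hamDist π = C + ((if π i = i then 0 else 1) + (if π j = j then 0 else 1))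
      ∧ hamDist (π * Equiv.swap i j)
          = C + ((if π j = i then 0 else 1) + (if π i = j then 0 else 1)) := by
  refine ⟨((univ \ {i, j}).filter (fun k => π k ≠ k)).card, ?_, ?_⟩
  · have h1 : hamDist π = ∑ k, if π k ≠ k then 1 else 0 := by
      simp [hamDist, Finset.card_filter]
    rw [h1, ← Finset.sum_sdiff (Finset.subset_univ {i, j}), Finset.sum_pair hij,
      Finset.card_filter]
    simp only [ite_not]
  · have h1 : hamDist (π * Equiv.swap i j) = ∑ k, if (π * Equiv.swap i j) k ≠ k then 1 else 0 := by
      rw [hamDist, Finset.card_filter]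
    rw [h1, ← Finset.sum_sdiff (Finset.subset_univ {i, j}), Finset.sum_pair hij,
      Finset.card_filter]
    have e1 : ∀ k ∈ univ \ ({i, j} : Finset (Fin n)),
        (if (π * Equiv.swap i j) k ≠ k then (1:ℕ) else 0) = if π k ≠ k then 1 else 0 := by
      intro k hk
      simp only [Finset.mem_sdiff, Finset.mem_insert, Finset.mem_singleton] at hk
      rw [Equiv.Perm.mul_apply, Equiv.swap_apply_of_ne_of_ne (by tauto) (by tauto)]
    rw [Finset.sum_congr rfl e1]
    have h3 : (π * Equiv.swap i j) i = π j := by simp [Equiv.Perm.mul_apply]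
    have h2 : (π * Equiv.swap i j) j = π i := by simp [Equiv.Perm.mul_apply]
    rw [h3, h2]
    simp only [ite_not]

lemma char2 {n : ℕ} (π : Equiv.Perm (Fin n)) {i j : Fin n} (hij : i < j) :
    (hamDist (π * Equiv.swap i j) + 2 = hamDist π) ↔ (π i = j ∧ π j = i) := by
  obtain ⟨C, h1, h2⟩ := ham_split π i j hij.ne
  rw [h1, h2]
  have hne : i ≠ j := hij.ne
  by_cases a : π i = i <;> by_cases b : π j = j <;> by_cases c : π i = j <;>
    by_cases e : π j = i <;> simp_all <;> omega

lemma char1 {n : ℕ} (π : Equiv.Perm (Fin n)) {i j : Fin n} (hij : i < j) :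
    (hamDist (π * Equiv.swap i j) + 1 = hamDist π) ↔
      (π i ≠ i ∧ π j ≠ j ∧ ((π i = j ∧ π j ≠ i) ∨ (π i ≠ j ∧ π j = i))) := by
  obtain ⟨C, h1, h2⟩ := ham_split π i j hij.ne
  rw [h1, h2]
  have hne : i ≠ j := hij.ne
  by_cases a : π i = i <;> by_cases b : π j = j <;> by_cases c : π i = j <;>
    by_cases e : π j = i <;> simp_all <;> omega

open Finset in
lemma countA {n : ℕ} (π : Equiv.Perm (Fin n)) :
    (univ.filter (fun k : Fin n => π k ≠ k ∧ π (π k) = k)).card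
      = 2 * ((univ ×ˢ univ).filter
          (fun p : Fin n × Fin n => p.1 < p.2 ∧ π p.1 = p.2 ∧ π p.2 = p.1)).card := by
  set A := univ.filter (fun k : Fin n => π k ≠ k ∧ π (π k) = k) with hA
  set T := ((univ ×ˢ univ).filter
      (fun p : Fin n × Fin n => p.1 < p.2 ∧ π p.1 = p.2 ∧ π p.2 = p.1)) with hT
  have hsplit : (A.filter (fun k => k < π k)).card + (A.filter (fun k => ¬ k < π k)).card
      = A.card := Finset.card_filter_add_card_filter_not _
  have memA : ∀ k, k ∈ A ↔ π k ≠ k ∧ π (π k) = k := by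
    intro k; simp [hA]
  have memT : ∀ p : Fin n × Fin n, p ∈ T ↔ p.1 < p.2 ∧ π p.1 = p.2 ∧ π p.2 = p.1 := by
    intro p; simp [hT]
  have h1 : (A.filter (fun k => k < π k)).card = T.card := by
    apply Finset.card_bij (fun k _ => (k, π k))
    · intro a ha
      rw [Finset.mem_filter, memA] at ha
      rw [memT]
      exact ⟨ha.2, rfl, ha.1.2⟩
    · intro a ha b hb h
      exact congrArg Prod.fst h
    · intro p hp
      rw [memT] at hp
      obtain ⟨hlt, h1, h2⟩ := hp
      refine ⟨p.1, ?_, ?_⟩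
      · rw [Finset.mem_filter, memA, h1]
        exact ⟨⟨hlt.ne', h2⟩, hlt⟩
      · rw [h1]
  have h2 : (A.filter (fun k => ¬ k < π k)).card = T.card := by
    apply Finset.card_bij (fun k _ => (π k, k))
    · intro a ha
      rw [Finset.mem_filter, memA] at ha
      rw [memT]
      obtain ⟨⟨hne, hpp⟩, hnlt⟩ := ha
      exact ⟨lt_of_le_of_ne (not_lt.mp hnlt) hne, hpp, rfl⟩
    · intro a ha b hb h
      exact congrArg Prod.snd h
    · intro p hp
      rw [memT] at hp
      obtain ⟨hlt, h1, h2⟩ := hp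
      refine ⟨p.2, ?_, ?_⟩
      · rw [Finset.mem_filter, memA, h2]
        exact ⟨⟨hlt.ne, h1⟩, not_lt.mpr hlt.le⟩
      · rw [h2]
  omega

open Finset in
lemma countB {n : ℕ} (π : Equiv.Perm (Fin n)) :
    ((univ ×ˢ univ).filter
        (fun p : Fin n × Fin n => p.1 < p.2 ∧ π p.1 ≠ p.1 ∧ π p.2 ≠ p.2 ∧
          ((π p.1 = p.2 ∧ π p.2 ≠ p.1) ∨ (π p.1 ≠ p.2 ∧ π p.2 = p.1)))).card
      = (univ.filter (fun k : Fin n => π k ≠ k ∧ π (π k) ≠ k)).card := by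
  set S := ((univ ×ˢ univ).filter
      (fun p : Fin n × Fin n => p.1 < p.2 ∧ π p.1 ≠ p.1 ∧ π p.2 ≠ p.2 ∧
        ((π p.1 = p.2 ∧ π p.2 ≠ p.1) ∨ (π p.1 ≠ p.2 ∧ π p.2 = p.1)))) with hS
  set B := univ.filter (fun k : Fin n => π k ≠ k ∧ π (π k) ≠ k) with hB
  have memS : ∀ p : Fin n × Fin n, p ∈ S ↔ p.1 < p.2 ∧ π p.1 ≠ p.1 ∧ π p.2 ≠ p.2 ∧
      ((π p.1 = p.2 ∧ π p.2 ≠ p.1) ∨ (π p.1 ≠ p.2 ∧ π p.2 = p.1)) := by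
    intro p; simp [hS]
  have memB : ∀ k, k ∈ B ↔ π k ≠ k ∧ π (π k) ≠ k := by intro k; simp [hB]
  apply Finset.card_bij (fun p _ => if π p.1 = p.2 then p.1 else p.2)
  · intro p hp
    rw [memS] at hp
    obtain ⟨hlt, h1, h2, hcase⟩ := hp
    by_cases c : π p.1 = p.2
    · rw [if_pos c, memB]
      refine ⟨h1, ?_⟩
      rw [c]
      rcases hcase with ⟨_, h⟩ | ⟨h, _⟩
      · exact h
      · exact absurd c h
    · rw [if_neg c, memB]
      rcases hcase with ⟨h, _⟩ | ⟨_, h⟩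
      · exact absurd h c
      · refine ⟨h2, ?_⟩
        rw [h]
        exact c
  · have key : ∀ p ∈ S, let k := if π p.1 = p.2 then p.1 else p.2;
        (k < π k ∧ p = (k, π k)) ∨ (π k < k ∧ p = (π k, k)) := by
      intro p hp
      rw [memS] at hp
      obtain ⟨hlt, h1, h2, hcase⟩ := hp
      by_cases c : π p.1 = p.2
      · simp only [if_pos c]
        left
        rw [c]
        exact ⟨hlt, rfl⟩
      · simp only [if_neg c]
        rcases hcase with ⟨h, _⟩ | ⟨_, h⟩
        · exact absurd h c
        · right
          rw [h]
          exact ⟨hlt, rfl⟩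
    intro a ha b hb h
    have ka := key a ha
    have kb := key b hb
    simp only at ka kb
    rw [h] at ka
    rcases ka with ⟨l1, e1⟩ | ⟨l1, e1⟩ <;> rcases kb with ⟨l2, e2⟩ | ⟨l2, e2⟩
    · exact e1.trans e2.symm
    · exact absurd l1 (asymm l2)
    · exact absurd l1 (asymm l2)
    · exact e1.trans e2.symm
  · intro k hk
    rw [memB] at hk
    obtain ⟨h1, h2⟩ := hk
    rcases lt_trichotomy k (π k) with hlt | heq | hgt
    · refine ⟨(k, π k), ?_, ?_⟩
      · rw [memS]
        refine ⟨hlt, h1, ?_, Or.inl ⟨rfl, h2⟩⟩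
        intro h
        exact h1 (π.injective h)
      · simp
    · exact absurd heq.symm h1
    · refine ⟨(π k, k), ?_, ?_⟩
      · rw [memS]
        refine ⟨hgt, ?_, h1, Or.inr ⟨h2, rfl⟩⟩
        intro h
        exact h1 (π.injective h)
      · simp [h2]

open Finset in
theorem stmt_4 (n : ℕ) (π : Equiv.Perm (Fin n)) (d x : ℕ) (hd : hamDist π = d)
    (hx : x = ((Finset.univ ×ˢ Finset.univ).filter
        (fun p : Fin n × Fin n =>
          p.1 < p.2 ∧ hamDist (π * Equiv.swap p.1 p.2) + 2 = d)).card) :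
    ((Finset.univ ×ˢ Finset.univ).filter
        (fun p : Fin n × Fin n =>
          p.1 < p.2 ∧ hamDist (π * Equiv.swap p.1 p.2) + 1 = d)).card = d - 2 * x ∧
    x = ((Finset.univ ×ˢ Finset.univ).filter
        (fun p : Fin n × Fin n =>
          p.1 < p.2 ∧ π p.1 = p.2 ∧ π p.2 = p.1)).card := by
  subst hd
  have hsecond : ((univ ×ˢ univ).filter
      (fun p : Fin n × Fin n =>
        p.1 < p.2 ∧ hamDist (π * Equiv.swap p.1 p.2) + 2 = hamDist π))
      = ((univ ×ˢ univ).filter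
      (fun p : Fin n × Fin n => p.1 < p.2 ∧ π p.1 = p.2 ∧ π p.2 = p.1)) := by
    apply Finset.filter_congr
    intro p _
    constructor
    · rintro ⟨hlt, h⟩
      exact ⟨hlt, (char2 π hlt).mp h⟩
    · rintro ⟨hlt, h⟩
      exact ⟨hlt, (char2 π hlt).mpr h⟩
  have hfirst : ((univ ×ˢ univ).filter
      (fun p : Fin n × Fin n =>
        p.1 < p.2 ∧ hamDist (π * Equiv.swap p.1 p.2) + 1 = hamDist π))
      = ((univ ×ˢ univ).filter
      (fun p : Fin n × Fin n => p.1 < p.2 ∧ π p.1 ≠ p.1 ∧ π p.2 ≠ p.2 ∧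
        ((π p.1 = p.2 ∧ π p.2 ≠ p.1) ∨ (π p.1 ≠ p.2 ∧ π p.2 = p.1)))) := by
    apply Finset.filter_congr
    intro p _
    constructor
    · rintro ⟨hlt, h⟩
      obtain ⟨a, b, c⟩ := (char1 π hlt).mp h
      exact ⟨hlt, a, b, c⟩
    · rintro ⟨hlt, a, b, c⟩
      exact ⟨hlt, (char1 π hlt).mpr ⟨a, b, c⟩⟩
  have hAB : (univ.filter (fun k : Fin n => π k ≠ k ∧ π (π k) = k)).card
      + (univ.filter (fun k : Fin n => π k ≠ k ∧ π (π k) ≠ k)).card = hamDist π := by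
    have := Finset.card_filter_add_card_filter_not
      (s := univ.filter (fun k : Fin n => π k ≠ k)) (p := fun k => π (π k) = k)
    rw [Finset.filter_filter, Finset.filter_filter] at this
    exact this
  have hA := countA π
  have hB := countB π
  rw [hsecond] at hx
  refine ⟨?_, hx⟩
  rw [hfirst, hB]
  omega
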